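/- For every natural number n, the function φ_n(x) = e^{x²/2} H̃_n(x), where H̃_n is the n-th conjugate Hermite polynomial defined by H̃_n(x) = e^{−x²} (dⁿ/dxⁿ)[e^{x²}], satisfies −φ_n''(x) + x² φ_n(x) = −(2n+1) φ_n(x) for all real x. -/

import Mathlib

/-- The `n`-th conjugate Hermite polynomial
`H̃_n(x) = e^{−x²} (dⁿ/dxⁿ)[e^{x²}](x)`. -/
noncomputable def conjHermite (n : ℕ) (x : ℝ) : ℝ :=
  Real.exp (-x ^ 2) * iteratedDeriv n (fun t : ℝ => Real.exp (t ^ 2)) x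

/-- The virtual-state function `φ_n(x) = e^{x²/2} H̃_n(x)`. -/
noncomputable def virtualStateFun (n : ℕ) (x : ℝ) : ℝ :=
  Real.exp (x ^ 2 / 2) * conjHermite n x

private noncomputable def F : ℝ → ℝ := fun t => Real.exp (t ^ 2)

private lemma Fsmooth : ContDiff ℝ ⊤ F :=
  Real.contDiff_exp.comp (contDiff_id.pow 2)

private lemma gdiff (n : ℕ) : Differentiable ℝ (iteratedDeriv n F) :=
  Fsmooth.differentiable_iteratedDeriv n (by simp)

private lemma hD (n : ℕ) (x : ℝ) :
    HasDerivAt (iteratedDeriv n F) (iteratedDeriv (n + 1) F x) x := by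
  rw [iteratedDeriv_succ]
  exact ((gdiff n) x).hasDerivAt

private lemma g1 : iteratedDeriv 1 F = fun x => 2 * x * Real.exp (x ^ 2) := by
  funext x
  rw [iteratedDeriv_one]
  have h : HasDerivAt F (Real.exp (x ^ 2) * (2 * x ^ 1)) x := (hasDerivAt_pow 2 x).exp
  rw [h.deriv]; ring

private lemma key (n : ℕ) (x : ℝ) :
    iteratedDeriv (n + 2) F x =
      2 * x * iteratedDeriv (n + 1) F x + (2 * n + 2) * iteratedDeriv n F x := by
  induction n generalizing x with
  | zero =>
    have h : HasDerivAt (fun x : ℝ => 2 * x * Real.exp (x ^ 2))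
        (2 * Real.exp (x ^ 2) + 2 * x * (Real.exp (x ^ 2) * (2 * x ^ 1))) x := by
      have h1 : HasDerivAt (fun x : ℝ => 2 * x) 2 x := by
        simpa using (hasDerivAt_id x).const_mul (2 : ℝ)
      have h2 : HasDerivAt (fun x : ℝ => Real.exp (x ^ 2))
          (Real.exp (x ^ 2) * (2 * x ^ 1)) x := (hasDerivAt_pow 2 x).exp
      simpa [mul_comm] using h1.fun_mul h2
    have : iteratedDeriv 2 F x = deriv (iteratedDeriv 1 F) x := by
      rw [iteratedDeriv_succ]
    rw [this, g1, h.deriv]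
    simp only [g1, iteratedDeriv_zero, F]
    push_cast
    ring
  | succ m ih =>
    have heq : iteratedDeriv (m + 2) F = fun y =>
        2 * y * iteratedDeriv (m + 1) F y + (2 * (m : ℝ) + 2) * iteratedDeriv m F y :=
      funext fun y => ih y
    have h : HasDerivAt (fun y : ℝ =>
        2 * y * iteratedDeriv (m + 1) F y + (2 * (m : ℝ) + 2) * iteratedDeriv m F y)
        ((2 * iteratedDeriv (m + 1) F x + 2 * x * iteratedDeriv (m + 2) F x) +
          (2 * (m : ℝ) + 2) * iteratedDeriv (m + 1) F x) x := by
      have h1 : HasDerivAt (fun y : ℝ => 2 * y) 2 x := by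
        simpa using (hasDerivAt_id x).const_mul (2 : ℝ)
      exact (h1.mul (hD (m + 1) x)).add ((hD m x).const_mul (2 * (m : ℝ) + 2))
    have h3 : iteratedDeriv (m + 3) F x = deriv (iteratedDeriv (m + 2) F) x := by
      rw [iteratedDeriv_succ]
    have := h3.trans (by rw [heq, h.deriv])
    rw [show m + 1 + 2 = m + 3 from rfl, this]
    push_cast
    ring

private lemma phi_eq (n : ℕ) :
    virtualStateFun n = fun x => Real.exp (-(x ^ 2 / 2)) * iteratedDeriv n F x := by
  funext x
  unfold virtualStateFun conjHermite
  show Real.exp (x ^ 2 / 2) * (Real.exp (-x ^ 2) * iteratedDeriv n F x) = _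
  rw [show Real.exp (x ^ 2 / 2) * (Real.exp (-x ^ 2) * iteratedDeriv n F x) =
    (Real.exp (x ^ 2 / 2) * Real.exp (-x ^ 2)) * iteratedDeriv n F x from by ring,
    ← Real.exp_add, show x ^ 2 / 2 + -x ^ 2 = -(x ^ 2 / 2) from by ring]

private lemma hE (x : ℝ) : HasDerivAt (fun x : ℝ => Real.exp (-(x ^ 2 / 2)))
    (Real.exp (-(x ^ 2 / 2)) * -x) x := by
  have : HasDerivAt (fun x : ℝ => -(x ^ 2 / 2)) (-(2 * x ^ 1 / 2)) x :=
    ((hasDerivAt_pow 2 x).div_const 2).neg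
  simpa using this.exp

private lemma phi_deriv (n : ℕ) : deriv (virtualStateFun n) = fun x =>
    Real.exp (-(x ^ 2 / 2)) *
      (iteratedDeriv (n + 1) F x - x * iteratedDeriv n F x) := by
  funext x
  rw [phi_eq]
  have h : HasDerivAt (fun x => Real.exp (-(x ^ 2 / 2)) * iteratedDeriv n F x)
      (Real.exp (-(x ^ 2 / 2)) * -x * iteratedDeriv n F x +
        Real.exp (-(x ^ 2 / 2)) * iteratedDeriv (n + 1) F x) x :=
    (hE x).mul (hD n x)
  rw [h.deriv]; ring

theorem conj_hermite_oscillator_equation (n : ℕ) (x : ℝ) :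
    -iteratedDeriv 2 (virtualStateFun n) x + x ^ 2 * virtualStateFun n x =
      -(2 * (n : ℝ) + 1) * virtualStateFun n x := by
  have h2 : iteratedDeriv 2 (virtualStateFun n) x = deriv (deriv (virtualStateFun n)) x := by
    rw [iteratedDeriv_succ, iteratedDeriv_one]
  have h : HasDerivAt (fun x => Real.exp (-(x ^ 2 / 2)) *
      (iteratedDeriv (n + 1) F x - x * iteratedDeriv n F x))
      (Real.exp (-(x ^ 2 / 2)) * -x *
          (iteratedDeriv (n + 1) F x - x * iteratedDeriv n F x) +
        Real.exp (-(x ^ 2 / 2)) *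
          (iteratedDeriv (n + 2) F x -
            (iteratedDeriv n F x + x * iteratedDeriv (n + 1) F x))) x := by
    refine (hE x).mul (((hD (n + 1) x).sub ?_))
    simpa using (hasDerivAt_id x).fun_mul (hD n x)
  rw [h2, phi_deriv, h.deriv, phi_eq, key n x]
  push_cast
  ring
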